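/- Let X ⊆ ℂⁿ be open and let f : X → ℂ be holomorphic on a convex open set X. Then for each fixed z ∈ X there exist holomorphic functions h_1(ζ,z),…,h_n(ζ,z), holomorphic in both ζ and z, such that f(ζ) − f(z) = Σ_{j=1}^n (ζ_j − z_j) h_j(ζ, z) for all ζ, z ∈ X (a Hefer decomposition). -/

import Mathlib

open Metric Set MeasureTheory intervalIntegral Complex

lemma cauchy_fderiv_bound {n : ℕ} {X : Set (Fin n → ℂ)} (hXo : IsOpen X)
    {f : (Fin n → ℂ) → ℂ} (hf : DifferentiableOn ℂ f X) {p : Fin n → ℂ} {R : ℝ}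
    (hR : 0 < R) (hsub : closedBall p R ⊆ X) :
    ∃ M, 0 ≤ M ∧ ∀ w ∈ closedBall p (R / 2), ‖fderiv ℂ f w‖ ≤ M := by
  obtain ⟨C, hC⟩ :=
    (isCompact_closedBall p R).exists_bound_of_continuousOn (hf.continuousOn.mono hsub)
  have hC0 : 0 ≤ C := le_trans (norm_nonneg _) (hC p (mem_closedBall_self hR.le))
  refine ⟨4 * C / R, by positivity, fun w hw => ?_⟩
  have hwp : dist w p ≤ R / 2 := hw
  refine ContinuousLinearMap.opNorm_le_bound _ (by positivity) fun v => ?_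
  rcases eq_or_ne v 0 with rfl | hv
  · simp
  have hv0 : (0:ℝ) < ‖v‖ := norm_pos_iff.2 hv
  set ρ : ℝ := R / (4 * ‖v‖) with hρdef
  have hρ : 0 < ρ := by positivity
  have hρv : ρ * ‖v‖ = R / 4 := by rw [hρdef]; field_simp
  have key : ∀ u : ℂ, ‖u‖ ≤ ρ → w + u • v ∈ closedBall p R := by
    intro u hu
    have : dist (w + u • v) p ≤ dist w p + ‖u • v‖ := by
      rw [dist_eq_norm, dist_eq_norm]
      calc ‖w + u • v - p‖ = ‖(w - p) + u • v‖ := by ring_nf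
        _ ≤ ‖w - p‖ + ‖u • v‖ := norm_add_le _ _
    refine mem_closedBall.2 (this.trans ?_)
    have : ‖u • v‖ ≤ R / 4 := by
      rw [norm_smul]
      calc ‖u‖ * ‖v‖ ≤ ρ * ‖v‖ := by gcongr
        _ = R / 4 := hρv
    linarith
  have haff : ∀ u : ℂ, HasDerivAt (fun u : ℂ => w + u • v) v u := by
    intro u
    simpa using ((hasDerivAt_id u).smul_const v).const_add w
  have hsd : DifferentiableOn ℂ (fun u : ℂ => f (w + u • v)) (closedBall 0 ρ) := by
    intro u hu
    have hm : w + u • v ∈ X := hsub (key u (by simpa using hu))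
    exact ((hf.differentiableAt (hXo.mem_nhds hm)).comp u
      (haff u).differentiableAt).differentiableWithinAt
  have hdc : DiffContOnCl ℂ (fun u : ℂ => f (w + u • v)) (ball 0 ρ) :=
    (hsd.mono closure_ball_subset_closedBall).diffContOnCl
  have hd : HasDerivAt (fun u : ℂ => f (w + u • v)) (fderiv ℂ f w v) 0 := by
    have hmw : w ∈ X := by
      have := key 0 (by simp [hρ.le]); rw [show w + (0:ℂ) • v = w by simp] at this
      exact hsub this
    have hfd : HasFDerivAt f (fderiv ℂ f w) (w + (0:ℂ) • v) := by
      rw [show w + (0:ℂ) • v = w by simp]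
      exact (hf.differentiableAt (hXo.mem_nhds hmw)).hasFDerivAt
    exact hfd.comp_hasDerivAt 0 (haff 0)
  have est := Complex.norm_deriv_le_of_forall_mem_sphere_norm_le hρ hdc
    (fun z hz => hC _ (key z (by simpa using le_of_eq (mem_sphere_zero_iff_norm.1 hz))))
  rw [hd.deriv] at est
  calc ‖fderiv ℂ f w v‖ ≤ C / ρ := est
    _ = 4 * C / R * ‖v‖ := by rw [hρdef]; field_simp

lemma fderiv_bound_compact {n : ℕ} {X : Set (Fin n → ℂ)} (hXo : IsOpen X)
    {f : (Fin n → ℂ) → ℂ} (hf : DifferentiableOn ℂ f X) {K : Set (Fin n → ℂ)}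
    (hK : IsCompact K) (hKX : K ⊆ X) :
    ∃ M, 0 ≤ M ∧ ∀ w ∈ K, ‖fderiv ℂ f w‖ ≤ M := by
  refine hK.induction_on (p := fun S => ∃ M, 0 ≤ M ∧ ∀ w ∈ S, ‖fderiv ℂ f w‖ ≤ M)
    ⟨0, le_refl _, by simp⟩ ?_ ?_ ?_
  · rintro s t hst ⟨M, hM0, hM⟩; exact ⟨M, hM0, fun w hw => hM w (hst hw)⟩
  · rintro s t ⟨M, hM0, hM⟩ ⟨M', hM0', hM'⟩
    exact ⟨max M M', le_max_of_le_left hM0, fun w hw => hw.elim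
      (fun h => (hM w h).trans (le_max_left _ _))
      (fun h => (hM' w h).trans (le_max_right _ _))⟩
  · intro x hx
    obtain ⟨R, hR0, hsub⟩ := Metric.nhds_basis_closedBall.mem_iff.1 (hXo.mem_nhds (hKX hx))
    obtain ⟨M, hM0, hM⟩ := cauchy_fderiv_bound hXo hf hR0 hsub
    exact ⟨closedBall x (R / 2),
      mem_nhdsWithin_of_mem_nhds (closedBall_mem_nhds x (by positivity)), M, hM0, hM⟩

set_option maxHeartbeats 1000000 in
set_option synthInstance.maxHeartbeats 400000 in
lemma fderiv_apply_differentiableOn {n : ℕ} {X : Set (Fin n → ℂ)} (hXo : IsOpen X)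
    {f : (Fin n → ℂ) → ℂ} (hf : DifferentiableOn ℂ f X) (v : Fin n → ℂ) :
    DifferentiableOn ℂ (fun w => fderiv ℂ f w v) X := by
  rcases eq_or_ne v 0 with rfl | hv
  · have : (fun w => fderiv ℂ f w (0 : Fin n → ℂ)) = fun _ => (0:ℂ) := by
      funext w; simp
    rw [this]; exact differentiableOn_const _
  intro w₀ hw₀
  obtain ⟨R, hR0, hsub⟩ := Metric.nhds_basis_closedBall.mem_iff.1 (hXo.mem_nhds hw₀)
  obtain ⟨M, hM0, hM⟩ := cauchy_fderiv_bound hXo hf hR0 hsub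
  have hv0 : (0:ℝ) < ‖v‖ := norm_pos_iff.2 hv
  set r : ℝ := R / (4 * ‖v‖) with hrdef
  have hr : 0 < r := by positivity
  have hrv : r * ‖v‖ = R / 4 := by rw [hrdef]; field_simp
  have hqnorm : ∀ θ : ℝ, ‖circleMap 0 r θ‖ = r := fun θ => by
    rw [norm_circleMap_zero, abs_of_pos hr]
  have hmem : ∀ w ∈ ball w₀ (R/4), ∀ u : ℂ, ‖u‖ ≤ r → w + u • v ∈ closedBall w₀ (R/2) := by
    intro w hw u hu
    have h1 : ‖w + u • v - w₀‖ ≤ ‖w - w₀‖ + ‖u • v‖ := by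
      calc ‖w + u • v - w₀‖ = ‖(w - w₀) + u • v‖ := by ring_nf
        _ ≤ ‖w - w₀‖ + ‖u • v‖ := norm_add_le _ _
    have h2 : ‖w - w₀‖ < R/4 := mem_ball_iff_norm.1 hw
    have h3 : ‖u • v‖ ≤ R/4 := by
      rw [norm_smul]
      calc ‖u‖ * ‖v‖ ≤ r * ‖v‖ := by gcongr
        _ = R/4 := hrv
    exact mem_closedBall_iff_norm.2 (by linarith)
  have hmemX : ∀ w ∈ ball w₀ (R/4), ∀ u : ℂ, ‖u‖ ≤ r → w + u • v ∈ X := fun w hw u hu =>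
    hsub (closedBall_subset_closedBall (by linarith) (hmem w hw u hu))
  set F : (Fin n → ℂ) → ℝ → ℂ := fun w θ =>
    deriv (circleMap 0 r) θ • ((circleMap 0 r θ) ^ (-2 : ℤ) • f (w + circleMap 0 r θ • v))
    with hFdef
  have heq : ∀ w ∈ ball w₀ (R/4),
      fderiv ℂ f w v = (2 * Real.pi * Complex.I : ℂ)⁻¹ • ∫ θ in (0:ℝ)..(2*Real.pi), F w θ := by
    intro w hw
    have haff : ∀ u : ℂ, HasDerivAt (fun u : ℂ => w + u • v) v u := by
      intro u
      simpa using ((hasDerivAt_id u).smul_const v).const_add w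
    have hsd : DifferentiableOn ℂ (fun u : ℂ => f (w + u • v)) (closedBall 0 r) := by
      intro u hu
      have hm : w + u • v ∈ X := hmemX w hw u (by simpa using hu)
      exact ((hf.differentiableAt (hXo.mem_nhds hm)).comp u
        (haff u).differentiableAt).differentiableWithinAt
    have hdc : DiffContOnCl ℂ (fun u : ℂ => f (w + u • v)) (ball 0 r) :=
      (hsd.mono closure_ball_subset_closedBall).diffContOnCl
    have hd : HasDerivAt (fun u : ℂ => f (w + u • v)) (fderiv ℂ f w v) 0 := by
      have hmw : w ∈ X := by
        have := hmemX w hw 0 (by simp [hr.le])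
        rwa [show w + (0:ℂ) • v = w by simp] at this
      have hfd : HasFDerivAt f (fderiv ℂ f w) (w + (0:ℂ) • v) := by
        rw [show w + (0:ℂ) • v = w by simp]
        exact (hf.differentiableAt (hXo.mem_nhds hmw)).hasFDerivAt
      exact hfd.comp_hasDerivAt 0 (haff 0)
    have hrep0 := hdc.deriv_eq_smul_circleIntegral hr
    have h2 : (2 * (Real.pi:ℂ) * Complex.I) ≠ 0 := by simp [Real.pi_ne_zero, Complex.I_ne_zero]
    have hrep : deriv (fun u : ℂ => f (w + u • v)) 0 = (2 * (Real.pi:ℂ) * Complex.I)⁻¹ •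
        circleIntegral (fun z => (z - 0) ^ (-2:ℤ) • f (w + z • v)) 0 r := by
      rw [show circleIntegral (fun z => (z - 0) ^ (-2:ℤ) • f (w + z • v)) 0 r =
          circleIntegral (fun z => (1 / (z - 0) ^ 2) • f (w + z • v)) 0 r by
            congr 1; funext z; simp [zpow_neg],
        hrep0, smul_smul, inv_mul_cancel₀ h2, one_smul]
    rw [hd.deriv] at hrep
    rw [hrep]
    congr 1
    rw [circleIntegral]
    simp only [sub_zero]
    rfl
  have hcm : Continuous (circleMap 0 r) := continuous_circleMap 0 r
  have hne : ∀ θ, circleMap 0 r θ ≠ 0 := fun θ => circleMap_ne_center hr.ne'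
  have hdcm : Continuous (deriv (circleMap 0 r)) := by
    have : deriv (circleMap 0 r) = fun θ => circleMap 0 r θ * Complex.I := by
      funext θ; exact deriv_circleMap 0 r θ
    rw [this]; exact hcm.mul continuous_const
  have hzpow : Continuous (fun θ => (circleMap 0 r θ) ^ (-2 : ℤ)) :=
    hcm.zpow₀ (-2) (fun θ => Or.inl (hne θ))
  have hcontw : ∀ w ∈ ball w₀ (R/4), Continuous (F w) := by
    intro w hw
    have hfc : Continuous (fun θ => f (w + circleMap 0 r θ • v)) := by
      refine (hf.continuousOn).comp_continuous (by fun_prop) (fun θ => ?_)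
      exact hmemX w hw _ (le_of_eq (hqnorm θ))
    exact hdcm.smul (hzpow.smul hfc)
  have hball : ball w₀ (R/4) ∈ nhds w₀ := ball_mem_nhds w₀ (by positivity)
  have hFD := intervalIntegral.hasFDerivAt_integral_of_dominated_of_fderiv_le
    (𝕜 := ℂ) (μ := volume) (a := 0) (b := 2*Real.pi) (x₀ := w₀)
    (F := F)
    (F' := fun w θ => (deriv (circleMap 0 r) θ * (circleMap 0 r θ) ^ (-2 : ℤ)) •
      fderiv ℂ f (w + circleMap 0 r θ • v))
    (bound := fun _ => r⁻¹ * M) (s := ball w₀ (R/4)) hball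
    (by filter_upwards [hball] with w hw
        exact (hcontw w hw).aestronglyMeasurable)
    ((hcontw w₀ (mem_ball_self (by positivity))).intervalIntegrable _ _)
    (by
      have h1 : Measurable (fun θ => fderiv ℂ f (w₀ + circleMap 0 r θ • v)) :=
        (measurable_fderiv ℂ f).comp (by fun_prop : Continuous
          (fun θ : ℝ => w₀ + circleMap 0 r θ • v)).measurable
      exact (((hdcm.mul hzpow).stronglyMeasurable).smul
        h1.stronglyMeasurable).aestronglyMeasurable)
    (Filter.Eventually.of_forall (fun θ _ w hw => by
      beta_reduce
      have hc : ‖deriv (circleMap 0 r) θ‖ = r := by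
        rw [deriv_circleMap, norm_mul, Complex.norm_I, mul_one, hqnorm]
      have hd2 : ‖(circleMap 0 r θ) ^ (-2:ℤ)‖ = r ^ (-2:ℤ) := by
        rw [norm_zpow, hqnorm]
      have hrr : r * r ^ (-2:ℤ) = r⁻¹ := by
        rw [zpow_neg, zpow_two, mul_inv, ← mul_assoc, mul_inv_cancel₀ hr.ne', one_mul]
      have hb : ‖(deriv (circleMap 0 r) θ * circleMap 0 r θ ^ (-2:ℤ)) •
          fderiv ℂ f (w + circleMap 0 r θ • v)‖ ≤
          ‖deriv (circleMap 0 r) θ * circleMap 0 r θ ^ (-2:ℤ)‖ *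
          ‖fderiv ℂ f (w + circleMap 0 r θ • v)‖ := by
        refine ContinuousLinearMap.opNorm_le_bound _ (by positivity) fun x => ?_
        rw [ContinuousLinearMap.smul_apply, norm_smul, mul_assoc]
        exact mul_le_mul_of_nonneg_left
          ((fderiv ℂ f (w + circleMap 0 r θ • v)).le_opNorm x) (norm_nonneg _)
      refine hb.trans ?_
      rw [norm_mul, hc, hd2, hrr]
      exact mul_le_mul_of_nonneg_left (hM _ (hmem w hw _ (le_of_eq (hqnorm θ))))
        (inv_nonneg.2 hr.le)))
    intervalIntegrable_const
    (Filter.Eventually.of_forall (fun θ _ w hw => by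
      have hy : w + circleMap 0 r θ • v ∈ X := hmemX w hw _ (le_of_eq (hqnorm θ))
      have h0 : HasFDerivAt f (fderiv ℂ f (w + circleMap 0 r θ • v))
          (w + circleMap 0 r θ • v) := (hf.differentiableAt (hXo.mem_nhds hy)).hasFDerivAt
      have h1 : HasFDerivAt (fun w : Fin n → ℂ => w + circleMap 0 r θ • v)
          (ContinuousLinearMap.id ℂ _) w := (hasFDerivAt_id w).add_const _
      have h2 := h0.comp w h1
      have h3 := (h2.const_smul ((circleMap 0 r θ) ^ (-2 : ℤ))).const_smul
        (deriv (circleMap 0 r) θ)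
      simpa [hFdef, ContinuousLinearMap.comp_id, smul_smul, Function.comp_def, Pi.smul_def, mul_assoc] using h3))
  have hdiff : DifferentiableAt ℂ
      (fun w => (2 * Real.pi * Complex.I : ℂ)⁻¹ • ∫ θ in (0:ℝ)..(2*Real.pi), F w θ) w₀ :=
    hFD.differentiableAt.fun_const_smul _
  exact (hdiff.congr_of_eventuallyEq
    (Filter.eventuallyEq_of_mem hball heq)).differentiableWithinAt

set_option maxHeartbeats 1000000 in
set_option synthInstance.maxHeartbeats 400000 in
/-- Hefer decomposition: if `f` is holomorphic on a convex open set `X ⊆ ℂⁿ`,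
there are functions `h_j(ζ, z)`, holomorphic jointly in `(ζ, z)` on `X × X`,
with `f(ζ) − f(z) = Σ_j (ζ_j − z_j) h_j(ζ, z)`. -/
theorem hefer_decomposition (n : ℕ) (X : Set (Fin n → ℂ)) (hXo : IsOpen X)
    (hXc : Convex ℝ X) (f : (Fin n → ℂ) → ℂ) (hf : DifferentiableOn ℂ f X) :
    ∃ h : Fin n → ((Fin n → ℂ) × (Fin n → ℂ)) → ℂ,
      (∀ j, DifferentiableOn ℂ (h j) (X ×ˢ X)) ∧
      ∀ ζ ∈ X, ∀ z ∈ X,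
        f ζ - f z = ∑ j, (ζ j - z j) * h j (ζ, z) := by
  set g : Fin n → (Fin n → ℂ) → ℂ := fun j w => fderiv ℂ f w (Pi.single j 1) with hgdef
  have hg : ∀ j, DifferentiableOn ℂ (g j) X := fun j =>
    fderiv_apply_differentiableOn hXo hf (Pi.single j 1)
  set Λ : ℝ → ((Fin n → ℂ) × (Fin n → ℂ)) →L[ℂ] (Fin n → ℂ) := fun t =>
    (t : ℂ) • ContinuousLinearMap.fst ℂ (Fin n → ℂ) (Fin n → ℂ) +
      ((1 : ℂ) - (t : ℂ)) • ContinuousLinearMap.snd ℂ (Fin n → ℂ) (Fin n → ℂ) with hΛdef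
  have hΛapply : ∀ (t : ℝ) (p : (Fin n → ℂ) × (Fin n → ℂ)),
      Λ t p = (t : ℂ) • p.1 + ((1 : ℂ) - (t : ℂ)) • p.2 := by
    intro t p; simp [hΛdef]
  have hΛmem : ∀ ζ ∈ X, ∀ z ∈ X, ∀ t ∈ Icc (0:ℝ) 1, Λ t (ζ, z) ∈ X := by
    intro ζ hζ z hz t ht
    have h := hXc hζ hz ht.1 (by linarith [ht.2] : (0:ℝ) ≤ 1 - t) (by ring)
    have e1 : ((t : ℝ) : ℂ) • ζ = t • ζ := Complex.coe_smul t ζ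
    have e2 : ((1 : ℂ) - (t : ℂ)) • z = (1 - t) • z := by
      rw [show ((1:ℂ) - (t:ℂ)) = (((1 - t : ℝ)) : ℂ) by push_cast; ring, Complex.coe_smul]
    rw [hΛapply, e1, e2]; exact h
  have hΛnorm : ∀ t ∈ Icc (0:ℝ) 1, ‖Λ t‖ ≤ 1 := by
    intro t ht
    refine ContinuousLinearMap.opNorm_le_bound _ zero_le_one fun p => ?_
    rw [hΛapply]
    have e1 : ‖((t:ℝ) : ℂ)‖ = t := by rw [Complex.norm_real, Real.norm_eq_abs, _root_.abs_of_nonneg ht.1]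
    have e2 : ‖((1:ℂ) - (t:ℂ))‖ = 1 - t := by
      rw [show ((1:ℂ) - (t:ℂ)) = (((1 - t : ℝ)) : ℂ) by push_cast; ring,
        Complex.norm_real, Real.norm_eq_abs, _root_.abs_of_nonneg (by linarith [ht.2])]
    calc ‖(t:ℂ) • p.1 + ((1:ℂ) - (t:ℂ)) • p.2‖
        ≤ ‖(t:ℂ) • p.1‖ + ‖((1:ℂ) - (t:ℂ)) • p.2‖ := norm_add_le _ _
      _ = t * ‖p.1‖ + (1 - t) * ‖p.2‖ := by rw [norm_smul, norm_smul, e1, e2]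
      _ ≤ t * ‖p‖ + (1 - t) * ‖p‖ := by
          gcongr
          · exact ht.1
          · exact norm_fst_le p
          · linarith [ht.2]
          · exact norm_snd_le p
      _ = 1 * ‖p‖ := by ring
  have hΛcont : ∀ p : (Fin n → ℂ) × (Fin n → ℂ), Continuous fun t : ℝ => Λ t p := by
    intro p
    have : (fun t : ℝ => Λ t p) = fun t : ℝ => (t : ℂ) • p.1 + ((1:ℂ) - (t:ℂ)) • p.2 :=
      funext fun t => hΛapply t p
    rw [this]; fun_prop
  have hΛb : Continuous fun t : ℝ => Λ t := by
    rw [hΛdef]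
    exact (Complex.continuous_ofReal.smul continuous_const).add
      ((continuous_const.sub Complex.continuous_ofReal).smul continuous_const)
  refine ⟨fun j p => ∫ t in (0:ℝ)..1, g j (Λ t p), fun j => ?_, ?_⟩
  · -- differentiability
    rintro p₀ hp₀
    rw [Set.mem_prod] at hp₀
    have hK₀ : IsCompact ((fun t : ℝ => Λ t p₀) '' Icc 0 1) :=
      isCompact_Icc.image (hΛcont p₀)
    have hK₀X : (fun t : ℝ => Λ t p₀) '' Icc 0 1 ⊆ X := by
      rintro _ ⟨t, ht, rfl⟩
      exact hΛmem p₀.1 hp₀.1 p₀.2 hp₀.2 t ht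
    obtain ⟨ρ, hρ0, hρX⟩ := hK₀.exists_cthickening_subset_open hXo hK₀X
    have hKc : IsCompact (cthickening ρ ((fun t : ℝ => Λ t p₀) '' Icc 0 1)) := hK₀.cthickening
    obtain ⟨M, hM0, hM⟩ := fderiv_bound_compact hXo (hg j) hKc hρX
    have hmemK : ∀ p ∈ ball p₀ ρ, ∀ t ∈ Icc (0:ℝ) 1,
        Λ t p ∈ cthickening ρ ((fun t : ℝ => Λ t p₀) '' Icc 0 1) := by
      intro p hp t ht
      refine mem_cthickening_of_dist_le (Λ t p) (Λ t p₀) ρ _ (mem_image_of_mem _ ht) ?_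
      rw [dist_eq_norm, ← map_sub]
      calc ‖Λ t (p - p₀)‖ ≤ ‖Λ t‖ * ‖p - p₀‖ := (Λ t).le_opNorm _
        _ ≤ 1 * ‖p - p₀‖ := by gcongr; exact hΛnorm t ht
        _ ≤ ρ := by rw [one_mul]; exact le_of_lt (mem_ball_iff_norm.1 hp)
    have hmemX : ∀ p ∈ ball p₀ ρ, ∀ t ∈ Icc (0:ℝ) 1, Λ t p ∈ X := fun p hp t ht =>
      hρX (hmemK p hp t ht)
    have hIsub : Set.uIoc (0:ℝ) 1 ⊆ Icc (0:ℝ) 1 := by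
      rw [Set.uIoc_of_le zero_le_one]; exact Ioc_subset_Icc_self
    have hFD := intervalIntegral.hasFDerivAt_integral_of_dominated_of_fderiv_le
      (𝕜 := ℂ) (μ := volume) (a := 0) (b := 1) (x₀ := p₀)
      (F := fun p t => g j (Λ t p))
      (F' := fun p t => (fderiv ℂ (g j) (Λ t p)).comp (Λ t))
      (bound := fun _ => M) (s := ball p₀ ρ) (ball_mem_nhds p₀ hρ0)
      (by
        filter_upwards [ball_mem_nhds p₀ hρ0] with p hp
        refine (ContinuousOn.aestronglyMeasurable ?_ measurableSet_uIoc)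
        refine ((hg j).continuousOn.comp ((hΛcont p).continuousOn) ?_).mono hIsub
        intro t ht
        exact hmemX p hp t ht)
      (by
        refine ContinuousOn.intervalIntegrable ?_
        rw [Set.uIcc_of_le zero_le_one]
        refine (hg j).continuousOn.comp ((hΛcont p₀).continuousOn) ?_
        intro t ht
        exact hmemX p₀ (mem_ball_self hρ0) t ht)
      (by
        have hA : Measurable fun t : ℝ => fderiv ℂ (g j) (Λ t p₀) :=
          (measurable_fderiv ℂ (g j)).comp (hΛcont p₀).measurable
        have hB : Measurable fun t : ℝ => Λ t := hΛb.measurable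
        have hcont2 : Continuous fun q :
            ((Fin n → ℂ) →L[ℂ] ℂ) × (((Fin n → ℂ) × (Fin n → ℂ)) →L[ℂ] (Fin n → ℂ)) =>
            q.1.comp q.2 := isBoundedBilinearMap_comp.continuous
        exact ((hcont2.measurable.comp
          (hA.prodMk hB)).stronglyMeasurable).aestronglyMeasurable)
      (Filter.Eventually.of_forall (fun t ht p hp => by
        have ht' : t ∈ Icc (0:ℝ) 1 := hIsub ht
        calc ‖(fderiv ℂ (g j) (Λ t p)).comp (Λ t)‖
            ≤ ‖fderiv ℂ (g j) (Λ t p)‖ * ‖Λ t‖ := ContinuousLinearMap.opNorm_comp_le _ _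
          _ ≤ M * 1 := by
              apply mul_le_mul (hM _ (hmemK p hp t ht')) (hΛnorm t ht') (norm_nonneg _) hM0
          _ = M := mul_one M))
      intervalIntegrable_const
      (Filter.Eventually.of_forall (fun t ht p hp => by
        have ht' : t ∈ Icc (0:ℝ) 1 := hIsub ht
        have hgd : HasFDerivAt (g j) (fderiv ℂ (g j) (Λ t p)) (Λ t p) :=
          ((hg j).differentiableAt (hXo.mem_nhds (hmemX p hp t ht'))).hasFDerivAt
        exact hgd.comp p (Λ t).hasFDerivAt))
    exact hFD.differentiableAt.differentiableWithinAt
  · -- the formula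
    intro ζ hζ z hz
    have hq : ∀ t ∈ Icc (0:ℝ) 1, Λ t (ζ, z) ∈ X := fun t ht => hΛmem ζ hζ z hz t ht
    have hsplit : ∀ w ∈ X, fderiv ℂ f w (ζ - z) = ∑ j, (ζ j - z j) * g j w := by
      intro w hw
      have hv : (ζ - z) = ∑ j, (ζ j - z j) • (Pi.single j (1:ℂ) : Fin n → ℂ) := by
        funext i
        simp [Pi.single_apply, Finset.sum_apply, Finset.sum_ite_eq', smul_eq_mul]
      rw [hv, map_sum]
      refine Finset.sum_congr rfl fun j _ => ?_
      rw [_root_.map_smul, smul_eq_mul]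
    have hde : ∀ t ∈ Icc (0:ℝ) 1, HasDerivAt (fun s : ℝ => f (Λ s (ζ, z)))
        (∑ j, (ζ j - z j) * g j (Λ t (ζ, z))) t := by
      intro t ht
      have h1 : HasDerivAt (fun s : ℝ => Λ s (ζ, z)) (ζ - z) t := by
        have e : (fun s : ℝ => Λ s (ζ, z)) = fun s : ℝ => (s : ℂ) • (ζ - z) + z := by
          funext s
          rw [hΛapply]
          simp only [smul_sub, sub_smul, one_smul]
          abel
        rw [e]
        have h2 : HasDerivAt (fun s : ℝ => (s : ℂ)) 1 t := by
          exact Complex.ofRealCLM.hasDerivAt (x := t)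
        simpa using (h2.smul_const (ζ - z)).add_const z
      have hfd : HasFDerivAt f (fderiv ℂ f (Λ t (ζ, z))) (Λ t (ζ, z)) :=
        (hf.differentiableAt (hXo.mem_nhds (hq t ht))).hasFDerivAt
      have h2 := (hfd.restrictScalars ℝ).comp_hasDerivAt t h1
      simp only [ContinuousLinearMap.coe_restrictScalars'] at h2
      rwa [hsplit _ (hq t ht)] at h2
    have hcontj : ∀ j, ContinuousOn (fun t : ℝ => g j (Λ t (ζ, z))) (Icc 0 1) := by
      intro j
      exact (hg j).continuousOn.comp (hΛcont (ζ, z)).continuousOn fun t ht => hq t ht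
    have hintj : ∀ j, IntervalIntegrable (fun t : ℝ => (ζ j - z j) * g j (Λ t (ζ, z)))
        volume 0 1 := by
      intro j
      refine ContinuousOn.intervalIntegrable ?_
      rw [Set.uIcc_of_le zero_le_one]
      exact continuousOn_const.mul (hcontj j)
    have hFTC := intervalIntegral.integral_eq_sub_of_hasDerivAt
      (f := fun s : ℝ => f (Λ s (ζ, z)))
      (f' := fun t => ∑ j, (ζ j - z j) * g j (Λ t (ζ, z)))
      (fun t ht => hde t (by rwa [Set.uIcc_of_le zero_le_one] at ht))
      (by
        refine ContinuousOn.intervalIntegrable ?_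
        rw [Set.uIcc_of_le zero_le_one]
        exact continuousOn_finset_sum _ fun j _ => continuousOn_const.mul (hcontj j))
    beta_reduce at hFTC
    have hΛ1 : Λ (1:ℝ) (ζ, z) = ζ := by rw [hΛapply]; simp
    have hΛ0 : Λ (0:ℝ) (ζ, z) = z := by rw [hΛapply]; simp
    rw [hΛ1, hΛ0] at hFTC
    beta_reduce
    rw [← hFTC, intervalIntegral.integral_finset_sum (fun j _ => hintj j)]
    exact Finset.sum_congr rfl fun j _ => (intervalIntegral.integral_const_mul _ _)
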